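/- Let s₀ < b ≤ +∞ and let h : [s₀, b) → ℝ be continuously differentiable with h(s) < 0 for all s ∈ [s₀, b). Then for each w₀ ∈ ℝ there exists a twice continuously differentiable function w : [s₀, b) → ℝ satisfying w'(s) = −(1 + w(s)²)·(1 − h(s)·w(s)) for all s ∈ [s₀, b) and w(s₀) = w₀, and any two such solutions coincide. -/

import Mathlib

open Set Filter Topology

/-! ### Auxiliary material -/

/-- The vector field of the ODE. -/
private def fvf (h : ℝ → ℝ) (t x : ℝ) : ℝ := -((1 + x ^ 2) * (1 - h t * x))

private lemma fvf_hasDerivAt (h : ℝ → ℝ) (t x : ℝ) :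
    HasDerivAt (fun y => fvf h t y) (h t * (1 + 3 * x ^ 2) - 2 * x) x := by
  have h1 : HasDerivAt (fun y : ℝ => 1 + y ^ 2) (2 * x) x := by
    simpa using (hasDerivAt_pow 2 x).const_add 1
  have h2 : HasDerivAt (fun y : ℝ => 1 - h t * y) (-(h t)) x := by
    simpa using ((hasDerivAt_id x).const_mul (h t)).const_sub 1
  have := (h1.mul h2).neg
  exact this.congr_deriv (by ring)

private lemma abs_sub_le'' (a b : ℝ) : |a - b| ≤ |a| + |b| := by
  calc |a - b| = |a + -b| := by ring_nf
  _ ≤ |a| + |-b| := abs_add_le _ _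
  _ = |a| + |b| := by rw [abs_neg]

private lemma abs_fvf_le {h : ℝ → ℝ} {t x A H : ℝ} (hx : |x| ≤ A) (hH : |h t| ≤ H) :
    |fvf h t x| ≤ (1 + A ^ 2) * (1 + H * A) := by
  have hA : 0 ≤ A := le_trans (abs_nonneg x) hx
  have hH0 : 0 ≤ H := le_trans (abs_nonneg _) hH
  have hx2 : x ^ 2 ≤ A ^ 2 := sq_le_sq' (neg_le_of_abs_le hx) (le_of_abs_le hx)
  have h2 : |1 - h t * x| ≤ 1 + H * A := by
    calc |1 - h t * x| ≤ |(1 : ℝ)| + |h t * x| := abs_sub_le'' 1 (h t * x)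
    _ = 1 + |h t| * |x| := by rw [abs_one, abs_mul]
    _ ≤ 1 + H * A := by
        have := mul_le_mul hH hx (abs_nonneg x) hH0
        linarith
  calc |fvf h t x| = |1 + x ^ 2| * |1 - h t * x| := by rw [fvf, abs_neg, abs_mul]
  _ ≤ (1 + A ^ 2) * (1 + H * A) := by
      apply mul_le_mul _ h2 (abs_nonneg _) (by positivity)
      rw [abs_of_nonneg (by positivity)]
      linarith

private lemma fvf_lipschitz {h : ℝ → ℝ} {t A H : ℝ} (hA : 0 ≤ A) (hH : |h t| ≤ H) :
    LipschitzOnWith (Real.toNNReal (H * (1 + 3 * A ^ 2) + 2 * A)) (fvf h t) (Icc (-A) A) := by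
  have hH0 : 0 ≤ H := le_trans (abs_nonneg _) hH
  have hL0 : (0 : ℝ) ≤ H * (1 + 3 * A ^ 2) + 2 * A := by positivity
  apply LipschitzOnWith.of_dist_le_mul
  intro x hx y hy
  rw [Real.dist_eq, Real.dist_eq, Real.coe_toNNReal _ hL0]
  have hb : ∀ z ∈ Icc (-A) A, ‖h t * (1 + 3 * z ^ 2) - 2 * z‖ ≤ H * (1 + 3 * A ^ 2) + 2 * A := by
    intro z hz
    rw [Real.norm_eq_abs]
    have hz' : |z| ≤ A := abs_le.mpr ⟨hz.1, hz.2⟩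
    have hz2 : z ^ 2 ≤ A ^ 2 := sq_le_sq' hz.1 hz.2
    have h1 : |h t * (1 + 3 * z ^ 2)| ≤ H * (1 + 3 * A ^ 2) := by
      rw [abs_mul]
      apply mul_le_mul hH _ (abs_nonneg _) hH0
      rw [abs_of_nonneg (by positivity)]
      linarith
    have h2 : |2 * z| ≤ 2 * A := by rw [abs_mul]; simpa using by linarith
    calc |h t * (1 + 3 * z ^ 2) - 2 * z| ≤ |h t * (1 + 3 * z ^ 2)| + |2 * z| :=
          abs_sub_le'' _ _
    _ ≤ H * (1 + 3 * A ^ 2) + 2 * A := add_le_add h1 h2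
  have := Convex.norm_image_sub_le_of_norm_hasDerivWithin_le
    (f := fvf h t) (f' := fun z => h t * (1 + 3 * z ^ 2) - 2 * z) (s := Icc (-A) A)
    (fun z _ => (fvf_hasDerivAt h t z).hasDerivWithinAt) hb (convex_Icc _ _) hx hy
  rw [Real.norm_eq_abs, Real.norm_eq_abs] at this
  calc |fvf h t x - fvf h t y| = |fvf h t y - fvf h t x| := abs_sub_comm _ _
  _ ≤ (H * (1 + 3 * A ^ 2) + 2 * A) * |y - x| := this
  _ = (H * (1 + 3 * A ^ 2) + 2 * A) * |x - y| := by rw [abs_sub_comm]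

/-- A barrier lemma: if the drift is negative whenever `w ≥ M`, then `w` stays `≤ M`. -/
private lemma barrier_above {a c M : ℝ} {w g : ℝ → ℝ}
    (hw : ∀ t ∈ Icc a c, HasDerivWithinAt w (g t) (Icc a c) t)
    (h0 : w a ≤ M) (hg : ∀ t ∈ Icc a c, M ≤ w t → g t < 0) :
    ∀ t ∈ Icc a c, w t ≤ M := by
  intro s₁ hs₁
  by_contra hM
  push_neg at hM
  have hwc : ContinuousOn w (Icc a c) := fun t ht => (hw t ht).continuousWithinAt
  have has₁ : a ≤ s₁ := hs₁.1
  set S : Set ℝ := {s | s ∈ Icc a s₁ ∧ w s ≤ M} with hS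
  have hne : S.Nonempty := ⟨a, left_mem_Icc.mpr has₁, h0⟩
  have hbdd : BddAbove S := ⟨s₁, fun x hx => hx.1.2⟩
  have hsub : Icc a s₁ ⊆ Icc a c := Icc_subset_Icc le_rfl hs₁.2
  have hclosed : IsClosed S := by
    have hSeq : S = Icc a s₁ ∩ w ⁻¹' (Iic M) := rfl
    rw [hSeq]
    exact (hwc.mono hsub).preimage_isClosed_of_isClosed isClosed_Icc isClosed_Iic
  have hScomp : IsCompact S := isCompact_Icc.of_isClosed_subset hclosed (fun x hx => hx.1)
  set u := sSup S with hu
  have huS : u ∈ S := hScomp.sSup_mem hne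
  have hus₁ : u ≤ s₁ := huS.1.2
  have hau : a ≤ u := huS.1.1
  have hu_lt : u < s₁ := by
    rcases lt_or_eq_of_le hus₁ with h' | h'
    · exact h'
    · rw [h'] at huS; linarith [huS.2]
  have hgt : ∀ t ∈ Ioc u s₁, M < w t := by
    intro t ht
    by_contra hle
    push_neg at hle
    have htS : t ∈ S := ⟨⟨hau.trans ht.1.le, ht.2⟩, hle⟩
    exact absurd (le_csSup hbdd htS) (not_le.mpr ht.1)
  have hanti : StrictAntiOn w (Icc u s₁) := by
    apply strictAntiOn_of_deriv_neg (convex_Icc u s₁)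
      (hwc.mono (Icc_subset_Icc hau hs₁.2))
    intro x hx
    rw [interior_Icc] at hx
    have hxmem : x ∈ Icc a c := ⟨hau.trans hx.1.le, hx.2.le.trans hs₁.2⟩
    have hd : HasDerivAt w (g x) x :=
      (hw x hxmem).hasDerivAt
        (Icc_mem_nhds (lt_of_le_of_lt hau hx.1) (lt_of_lt_of_le hx.2 hs₁.2))
    rw [hd.deriv]
    exact hg x hxmem (le_of_lt (hgt x ⟨hx.1, hx.2.le⟩))
  have h1 : w s₁ < w u :=
    hanti (left_mem_Icc.mpr hu_lt.le) (right_mem_Icc.mpr hu_lt.le) hu_lt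
  linarith [huS.2]

/-- Existence of a solution on a compact interval, for a globally continuous negative `h`. -/
private lemma exists_sol_Icc {h : ℝ → ℝ} (hcont : Continuous h) (hneg : ∀ t, h t < 0)
    {a c : ℝ} (hac : a ≤ c) (w₀ : ℝ) :
    ∃ w : ℝ → ℝ, w a = w₀ ∧ ∀ t ∈ Icc a c, HasDerivWithinAt w (fvf h t (w t)) (Icc a c) t := by
  obtain ⟨H, hHb⟩ := (isCompact_Icc (a := a) (b := c)).exists_bound_of_continuousOn
    hcont.continuousOn
  have hH0 : 0 ≤ H := (norm_nonneg _).trans (hHb a (left_mem_Icc.mpr hac))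
  have habs : ∀ t ∈ Icc a c, |h t| ≤ H := by
    intro t ht
    have := hHb t ht
    rwa [Real.norm_eq_abs] at this
  obtain ⟨δ, hδ, hle⟩ : ∃ δ : ℝ, 0 < δ ∧ ∀ t ∈ Icc a c, h t ≤ -δ := by
    obtain ⟨t₁, _, hmax⟩ := isCompact_Icc.exists_isMaxOn (nonempty_Icc.mpr hac)
      hcont.continuousOn
    exact ⟨-h t₁, neg_pos.mpr (hneg t₁), fun t ht => by simpa using hmax ht⟩
  obtain ⟨M, hM0, hw₀M⟩ : ∃ M : ℝ, 0 ≤ M ∧ w₀ ≤ M :=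
    ⟨max w₀ 0, le_max_right _ _, le_max_left _ _⟩
  have hinv : -(1 / δ) < 0 := by
    have := one_div_pos.mpr hδ
    linarith
  obtain ⟨m, hmw₀, hminv⟩ : ∃ m : ℝ, m ≤ w₀ ∧ m + 1 ≤ -(1 / δ) :=
    ⟨min w₀ (-(1 / δ)) - 1, by linarith [min_le_left w₀ (-(1 / δ))],
      by linarith [min_le_right w₀ (-(1 / δ))]⟩
  have hmM : m ≤ M := hmw₀.trans hw₀M
  have hm0 : m ≤ 0 := by linarith
  obtain ⟨A, hA0, hmA, hMA⟩ : ∃ A : ℝ, 0 ≤ A ∧ -A ≤ m ∧ M ≤ A := by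
    refine ⟨max (-m) M, ?_, ?_, le_max_right _ _⟩
    · exact le_trans hM0 (le_max_right _ _)
    · have := le_max_left (-m) M
      linarith
  have hsub : Icc m M ⊆ Icc (-A) A := fun x hx => ⟨by linarith [hx.1], by linarith [hx.2]⟩
  set P : ℝ → ℝ := fun x => max m (min x M) with hPdef
  have hPmem : ∀ x, P x ∈ Icc m M := fun x => ⟨le_max_left _ _, max_le hmM (min_le_right _ _)⟩
  have hPeq : ∀ x, m ≤ x → x ≤ M → P x = x := by
    intro x h1 h2
    simp only [hPdef]
    rw [min_eq_left h2, max_eq_right h1]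
  set v : ℝ → ℝ → ℝ := fun t x => fvf h t (P x) with hvdef
  set L := Real.toNNReal (H * (1 + 3 * A ^ 2) + 2 * A) with hLdef
  set C := (1 + A ^ 2) * (1 + H * A) with hCdef
  have hC0 : 0 ≤ C := by positivity
  set R := C * (c - a) with hRdef
  have hPL : IsPicardLindelof v (tmin := a) (tmax := c) ⟨a, left_mem_Icc.mpr hac⟩ w₀
      R.toNNReal 0 C.toNNReal L :=
    { lipschitzOnWith := by
        intro t ht
        have hlip : LipschitzOnWith L (fvf h t) (Icc (-A) A) := fvf_lipschitz hA0 (habs t ht)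
        have hPlip : LipschitzWith 1 P := (LipschitzWith.id.min_const M).const_max m
        have hcomp := hlip.comp (t := Icc (-A) A)
          (hPlip.lipschitzOnWith (s := Metric.closedBall w₀ (R.toNNReal : ℝ)))
          (fun x _ => hsub (hPmem x))
        rw [mul_one] at hcomp
        exact hcomp
      continuousOn := by
        intro x _
        have : Continuous fun t => -((1 + P x ^ 2) * (1 - h t * P x)) :=
          (continuous_const.mul (continuous_const.sub (hcont.mul continuous_const))).neg
        exact this.continuousOn
      norm_le := by
        intro t ht x _
        rw [Real.norm_eq_abs]
        have hPx : |P x| ≤ A := by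
          have := hsub (hPmem x)
          exact abs_le.mpr ⟨this.1, this.2⟩
        rw [Real.coe_toNNReal _ hC0]
        exact abs_fvf_le hPx (habs t ht)
      mul_max_le := by
        rw [Real.coe_toNNReal _ hC0, Real.coe_toNNReal _ (mul_nonneg hC0 (sub_nonneg.mpr hac)),
          NNReal.coe_zero, sub_zero]
        show C * max (c - a) (a - a) ≤ C * (c - a)
        have : max (c - a) (a - a) = c - a := by
          rw [sub_self]
          exact max_eq_left (sub_nonneg.mpr hac)
        rw [this] }
  obtain ⟨w, hw0, hwd⟩ := hPL.exists_eq_forall_mem_Icc_hasDerivWithinAt₀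
  replace hw0 : w a = w₀ := hw0
  have hup : ∀ t ∈ Icc a c, w t ≤ M := by
    apply barrier_above (g := fun t => v t (w t)) (fun t ht => hwd t ht)
    · rw [hw0]; exact hw₀M
    · intro t _ hMle
      have hPw : P (w t) = M := by
        simp only [hPdef]
        rw [min_eq_right hMle, max_eq_right hmM]
      have hhtM : h t * M ≤ 0 := mul_nonpos_of_nonpos_of_nonneg (hneg t).le hM0
      simp only [hvdef, hPw, fvf]
      nlinarith [sq_nonneg M]
  have hlow : ∀ t ∈ Icc a c, m ≤ w t := by
    have hbar := barrier_above (a := a) (c := c) (w := fun t => -w t)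
      (g := fun t => -(v t (w t))) (M := -m)
      (fun t ht => (hwd t ht).neg)
      (by show -w a ≤ -m; rw [hw0]; linarith)
      ?_
    · intro t ht
      have hb2 : -w t ≤ -m := hbar t ht
      linarith
    · intro t ht hge
      have hge' : -m ≤ -w t := hge
      have hwtm : w t ≤ m := by linarith
      have hPw : P (w t) = m := by
        simp only [hPdef]
        rw [min_eq_left (hwtm.trans hmM), max_eq_left hwtm]
      have h1 : h t ≤ -δ := hle t ht
      have e1 : -δ * m ≤ h t * m := mul_le_mul_of_nonpos_right h1 hm0
      have e4 : 0 ≤ -m - 1 / δ - 1 := by linarith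
      have e5 : δ * (1 / δ) = 1 := by field_simp
      have key : 1 + δ ≤ h t * m := by nlinarith [mul_nonneg hδ.le e4, e1, e5]
      have hpos : 0 < (1 + m ^ 2) * (h t * m - 1) := by nlinarith [sq_nonneg m]
      simp only [hvdef, hPw, fvf]
      nlinarith [hpos]
  refine ⟨w, hw0, fun t ht => ?_⟩
  have hD := hwd t ht
  have heq : v t (w t) = fvf h t (w t) := by
    simp only [hvdef]
    rw [hPeq _ (hlow t ht) (hup t ht)]
  rwa [heq] at hD

/-- Uniqueness of solutions on a compact interval, for a globally continuous `h`. -/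
private lemma uniq_Icc {h : ℝ → ℝ} (hcont : Continuous h) {a c : ℝ} (hac : a ≤ c)
    {w₁ w₂ : ℝ → ℝ}
    (hd₁ : ∀ t ∈ Icc a c, HasDerivWithinAt w₁ (fvf h t (w₁ t)) (Icc a c) t)
    (hd₂ : ∀ t ∈ Icc a c, HasDerivWithinAt w₂ (fvf h t (w₂ t)) (Icc a c) t)
    (heq : w₁ a = w₂ a) : EqOn w₁ w₂ (Icc a c) := by
  have hc₁ : ContinuousOn w₁ (Icc a c) := fun t ht => (hd₁ t ht).continuousWithinAt
  have hc₂ : ContinuousOn w₂ (Icc a c) := fun t ht => (hd₂ t ht).continuousWithinAt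
  obtain ⟨A₁, hA₁⟩ := isCompact_Icc.exists_bound_of_continuousOn hc₁
  obtain ⟨A₂, hA₂⟩ := isCompact_Icc.exists_bound_of_continuousOn hc₂
  obtain ⟨A, hA0, h1A, h2A⟩ : ∃ A : ℝ, 0 ≤ A ∧ A₁ ≤ A ∧ A₂ ≤ A :=
    ⟨max A₁ A₂, le_trans (norm_nonneg (w₁ a))
      ((hA₁ a (left_mem_Icc.mpr hac)).trans (le_max_left _ _)),
      le_max_left _ _, le_max_right _ _⟩
  obtain ⟨H, hH⟩ := isCompact_Icc.exists_bound_of_continuousOn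
    (hcont.continuousOn (s := Icc a c))
  set Q : ℝ → ℝ := fun t => max a (min t c) with hQdef
  have hQmem : ∀ t, Q t ∈ Icc a c := fun t => ⟨le_max_left _ _, max_le hac (min_le_right _ _)⟩
  have hQeq : ∀ t ∈ Icc a c, Q t = t := by
    intro t ht
    simp only [hQdef]
    rw [min_eq_left ht.2, max_eq_right ht.1]
  set h' : ℝ → ℝ := fun t => h (Q t) with h'def
  set v : ℝ → ℝ → ℝ := fun t x => fvf h' t x with hvdef
  set K := Real.toNNReal (H * (1 + 3 * A ^ 2) + 2 * A) with hKdef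
  have hv : ∀ t, LipschitzOnWith K (v t) (Icc (-A) A) := by
    intro t
    apply fvf_lipschitz hA0
    have := hH (Q t) (hQmem t)
    rwa [Real.norm_eq_abs] at this
  have hmemIci : ∀ t ∈ Ico a c, Icc a c ∈ 𝓝[Ici t] t := by
    intro t ht
    refine Filter.mem_of_superset (inter_mem_nhdsWithin (Ici t) (Iio_mem_nhds ht.2)) ?_
    intro x hx
    exact ⟨ht.1.trans hx.1, hx.2.le⟩
  have hderiv : ∀ (w : ℝ → ℝ),
      (∀ t ∈ Icc a c, HasDerivWithinAt w (fvf h t (w t)) (Icc a c) t) →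
      ∀ t ∈ Ico a c, HasDerivWithinAt w (v t (w t)) (Ici t) t := by
    intro w hd t ht
    have h1 := (hd t (Ico_subset_Icc_self ht)).mono_of_mem_nhdsWithin (hmemIci t ht)
    have heq2 : v t (w t) = fvf h t (w t) := by
      simp only [hvdef, h'def, fvf]
      rw [hQeq t (Ico_subset_Icc_self ht)]
    rwa [heq2]
  have hmem₁ : ∀ t ∈ Ico a c, w₁ t ∈ Icc (-A) A := by
    intro t ht
    have := hA₁ t (Ico_subset_Icc_self ht)
    rw [Real.norm_eq_abs] at this
    have : |w₁ t| ≤ A := this.trans h1A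
    exact abs_le.mp this |>.imp id id |> fun h => ⟨h.1, h.2⟩
  have hmem₂ : ∀ t ∈ Ico a c, w₂ t ∈ Icc (-A) A := by
    intro t ht
    have := hA₂ t (Ico_subset_Icc_self ht)
    rw [Real.norm_eq_abs] at this
    have : |w₂ t| ≤ A := this.trans h2A
    exact abs_le.mp this |>.imp id id |> fun h => ⟨h.1, h.2⟩
  exact ODE_solution_unique_of_mem_Icc_right (fun t _ => hv t) hc₁ (hderiv w₁ hd₁) hmem₁
    hc₂ (hderiv w₂ hd₂) hmem₂ heq

/-! ### Main statement -/

/-- A solution of `w' = −(1 + w²)(1 − h w)` with `w(s₀) = w₀` on the interval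
`[s₀, b)` (with `b` possibly `+∞`). -/
def IsNegSolOnIco (b : EReal) (h : ℝ → ℝ) (s₀ w₀ : ℝ) (w : ℝ → ℝ) : Prop :=
  ContDiffOn ℝ 2 w {s : ℝ | s₀ ≤ s ∧ (s : EReal) < b} ∧
  w s₀ = w₀ ∧
  ∀ s : ℝ, s₀ ≤ s → (s : EReal) < b →
    HasDerivWithinAt w (-((1 + w s ^ 2) * (1 - h s * w s)))
      {u : ℝ | s₀ ≤ u ∧ (u : EReal) < b} s

/-- If `h ∈ C¹[s₀, b)` is negative, then for each `w₀` the initial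
value problem `w' = −(1 + w²)(1 − h w)`, `w(s₀) = w₀` has a unique `C²` solution on
`[s₀, b)`. -/
theorem existence_uniqueness_negative_case
    (s₀ : ℝ) (b : EReal) (hs₀b : (s₀ : EReal) < b)
    (h : ℝ → ℝ)
    (hC1 : ContDiffOn ℝ 1 h {s : ℝ | s₀ ≤ s ∧ (s : EReal) < b})
    (hneg : ∀ s : ℝ, s₀ ≤ s → (s : EReal) < b → h s < 0) :
    ∀ w₀ : ℝ,
      (∃ w : ℝ → ℝ, IsNegSolOnIco b h s₀ w₀ w) ∧
      (∀ w₁ w₂ : ℝ → ℝ, IsNegSolOnIco b h s₀ w₀ w₁ → IsNegSolOnIco b h s₀ w₀ w₂ →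
        ∀ s : ℝ, s₀ ≤ s → (s : EReal) < b → w₁ s = w₂ s) := by
  classical
  intro w₀
  set D : Set ℝ := {s : ℝ | s₀ ≤ s ∧ (s : EReal) < b} with hDdef
  have hcontD : ContinuousOn h D := hC1.continuousOn
  have hIccD : ∀ c : ℝ, (c : EReal) < b → Icc s₀ c ⊆ D := by
    intro c hcb t ht
    exact ⟨ht.1, lt_of_le_of_lt (EReal.coe_le_coe_iff.mpr ht.2) hcb⟩
  have hexistsc : ∀ s : ℝ, (s : EReal) < b → ∃ c : ℝ, s < c ∧ (c : EReal) < b := by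
    intro s hs
    obtain ⟨x, hx1, hx2⟩ := exists_between hs
    induction x using EReal.rec with
    | bot => exact absurd hx1 (by simp)
    | coe y => exact ⟨y, EReal.coe_lt_coe_iff.mp hx1, hx2⟩
    | top => exact absurd hx2 (by simp)
  -- existence of solutions on each compact subinterval
  have hexi : ∀ c : ℝ, s₀ ≤ c → (c : EReal) < b →
      ∃ w : ℝ → ℝ, w s₀ = w₀ ∧
        ∀ t ∈ Icc s₀ c, HasDerivWithinAt w (fvf h t (w t)) (Icc s₀ c) t := by
    intro c hc0 hcb
    set Q : ℝ → ℝ := fun t => max s₀ (min t c) with hQdef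
    have hQmem : ∀ t, Q t ∈ Icc s₀ c := fun t =>
      ⟨le_max_left _ _, max_le hc0 (min_le_right _ _)⟩
    have hQeq : ∀ t ∈ Icc s₀ c, Q t = t := by
      intro t ht
      simp only [hQdef]
      rw [min_eq_left ht.2, max_eq_right ht.1]
    have hQcont : Continuous Q := continuous_const.max (continuous_id.min continuous_const)
    have h'cont : Continuous (h ∘ Q) :=
      (hcontD.mono (hIccD c hcb)).comp_continuous hQcont hQmem
    have h'neg : ∀ t, (h ∘ Q) t < 0 := fun t =>
      hneg (Q t) (hQmem t).1 (lt_of_le_of_lt (EReal.coe_le_coe_iff.mpr (hQmem t).2) hcb)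
    obtain ⟨w, hw0, hwd⟩ := exists_sol_Icc h'cont h'neg hc0 w₀
    refine ⟨w, hw0, fun t ht => ?_⟩
    have hD1 := hwd t ht
    have heq : fvf (h ∘ Q) t (w t) = fvf h t (w t) := by
      simp only [fvf, Function.comp]
      rw [hQeq t ht]
    rwa [heq] at hD1
  -- uniqueness on each compact subinterval
  have huni : ∀ c : ℝ, s₀ ≤ c → (c : EReal) < b → ∀ w₁ w₂ : ℝ → ℝ,
      (∀ t ∈ Icc s₀ c, HasDerivWithinAt w₁ (fvf h t (w₁ t)) (Icc s₀ c) t) →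
      (∀ t ∈ Icc s₀ c, HasDerivWithinAt w₂ (fvf h t (w₂ t)) (Icc s₀ c) t) →
      w₁ s₀ = w₂ s₀ → EqOn w₁ w₂ (Icc s₀ c) := by
    intro c hc0 hcb w₁ w₂ hd₁ hd₂ h12
    set Q : ℝ → ℝ := fun t => max s₀ (min t c) with hQdef
    have hQmem : ∀ t, Q t ∈ Icc s₀ c := fun t =>
      ⟨le_max_left _ _, max_le hc0 (min_le_right _ _)⟩
    have hQeq : ∀ t ∈ Icc s₀ c, Q t = t := by
      intro t ht
      simp only [hQdef]
      rw [min_eq_left ht.2, max_eq_right ht.1]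
    have hQcont : Continuous Q := continuous_const.max (continuous_id.min continuous_const)
    have h'cont : Continuous (h ∘ Q) :=
      (hcontD.mono (hIccD c hcb)).comp_continuous hQcont hQmem
    have htrans : ∀ (w : ℝ → ℝ),
        (∀ t ∈ Icc s₀ c, HasDerivWithinAt w (fvf h t (w t)) (Icc s₀ c) t) →
        ∀ t ∈ Icc s₀ c, HasDerivWithinAt w (fvf (h ∘ Q) t (w t)) (Icc s₀ c) t := by
      intro w hd t ht
      have heq : fvf (h ∘ Q) t (w t) = fvf h t (w t) := by
        simp only [fvf, Function.comp]
        rw [hQeq t ht]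
      rw [heq]
      exact hd t ht
    exact uniq_Icc h'cont hc0 (htrans w₁ hd₁) (htrans w₂ hd₂) h12
  choose sol hsol0 hsol1 using hexi
  -- the glued solution
  set W : ℝ → ℝ := fun s =>
    if hs : s₀ ≤ s ∧ (s : EReal) < b then sol s hs.1 hs.2 s else w₀ with hWdef
  have hkey : ∀ c (hc0 : s₀ ≤ c) (hcb : (c : EReal) < b),
      ∀ t ∈ Icc s₀ c, W t = sol c hc0 hcb t := by
    intro c hc0 hcb t ht
    have htb : (t : EReal) < b := lt_of_le_of_lt (EReal.coe_le_coe_iff.mpr ht.2) hcb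
    have h1 : W t = sol t ht.1 htb t := by
      simp only [hWdef]
      rw [dif_pos ⟨ht.1, htb⟩]
    have h2 : EqOn (sol t ht.1 htb) (sol c hc0 hcb) (Icc s₀ t) := by
      apply huni t ht.1 htb
      · exact hsol1 t ht.1 htb
      · intro u hu
        exact (hsol1 c hc0 hcb u (Icc_subset_Icc le_rfl ht.2 hu)).mono
          (Icc_subset_Icc le_rfl ht.2)
      · rw [hsol0, hsol0]
    rw [h1, h2 (right_mem_Icc.mpr ht.1)]
  have hW0 : W s₀ = w₀ := by
    rw [hkey s₀ le_rfl hs₀b s₀ (left_mem_Icc.mpr le_rfl), hsol0]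
  have hWd : ∀ s : ℝ, s₀ ≤ s → (s : EReal) < b →
      HasDerivWithinAt W (fvf h s (W s)) D s := by
    intro s hs0 hsb
    obtain ⟨c, hsc, hcb⟩ := hexistsc s hsb
    have hc0 : s₀ ≤ c := hs0.trans hsc.le
    have hnh : Icc s₀ c ∈ 𝓝[D] s := by
      refine Filter.mem_of_superset (inter_mem_nhdsWithin D (Iio_mem_nhds hsc)) ?_
      intro x hx
      exact ⟨hx.1.1, hx.2.le⟩
    have hd := (hsol1 c hc0 hcb s ⟨hs0, hsc.le⟩).mono_of_mem_nhdsWithin hnh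
    have hev : W =ᶠ[𝓝[D] s] sol c hc0 hcb :=
      Filter.eventuallyEq_of_mem hnh (fun t ht => hkey c hc0 hcb t ht)
    have hfin := hd.congr_of_eventuallyEq hev (hkey c hc0 hcb s ⟨hs0, hsc.le⟩)
    rw [show W s = sol c hc0 hcb s from hkey c hc0 hcb s ⟨hs0, hsc.le⟩]
    exact hfin
  have hud : UniqueDiffOn ℝ D := by
    induction b using EReal.rec with
    | bot => exact absurd hs₀b (by simp)
    | coe y =>
        have hDeq : D = Ico s₀ y := by
          ext x
          simp [hDdef, EReal.coe_lt_coe_iff, mem_Ico]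
        rw [hDeq]
        exact uniqueDiffOn_Ico s₀ y
    | top =>
        have hDeq : D = Ici s₀ := by
          ext x
          simp [hDdef, EReal.coe_lt_top]
        rw [hDeq]
        exact uniqueDiffOn_Ici s₀
  have hWdiff : DifferentiableOn ℝ W D := fun s hs =>
    (hWd s hs.1 hs.2).differentiableWithinAt
  have hWder : ∀ s ∈ D, derivWithin W D s = fvf h s (W s) := fun s hs =>
    (hWd s hs.1 hs.2).derivWithin (hud s hs)
  have hWc : ContinuousOn W D := hWdiff.continuousOn
  have hg0 : ContinuousOn (fun s => fvf h s (W s)) D := by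
    simp only [fvf]
    exact ((continuousOn_const.add (hWc.pow 2)).mul
      (continuousOn_const.sub (hcontD.mul hWc))).neg
  have hW1 : ContDiffOn ℝ 1 W D := by
    rw [show (1 : WithTop ℕ∞) = 0 + 1 from rfl, contDiffOn_succ_iff_derivWithin hud]
    refine ⟨hWdiff, ?_, ?_⟩
    · intro h0
      exact absurd h0 (by simp)
    · exact contDiffOn_zero.mpr (hg0.congr hWder)
  have hfv1 : ContDiffOn ℝ 1 (fun s => fvf h s (W s)) D := by
    simp only [fvf]
    exact ((contDiffOn_const.add (hW1.pow 2)).mul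
      (contDiffOn_const.sub (hC1.mul hW1))).neg
  have hW2 : ContDiffOn ℝ 2 W D := by
    rw [show (2 : WithTop ℕ∞) = 1 + 1 from by norm_num, contDiffOn_succ_iff_derivWithin hud]
    refine ⟨hWdiff, ?_, ?_⟩
    · intro h0
      exact absurd h0 (by simp)
    · exact hfv1.congr hWder
  constructor
  · exact ⟨W, hW2, hW0, fun s h1 h2 => hWd s h1 h2⟩
  · intro w₁ w₂ hw₁ hw₂ s hs0 hsb
    have hd₁ : ∀ t ∈ Icc s₀ s, HasDerivWithinAt w₁ (fvf h t (w₁ t)) (Icc s₀ s) t := by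
      intro t ht
      have htb : (t : EReal) < b := lt_of_le_of_lt (EReal.coe_le_coe_iff.mpr ht.2) hsb
      exact (hw₁.2.2 t ht.1 htb).mono (hIccD s hsb)
    have hd₂ : ∀ t ∈ Icc s₀ s, HasDerivWithinAt w₂ (fvf h t (w₂ t)) (Icc s₀ s) t := by
      intro t ht
      have htb : (t : EReal) < b := lt_of_le_of_lt (EReal.coe_le_coe_iff.mpr ht.2) hsb
      exact (hw₂.2.2 t ht.1 htb).mono (hIccD s hsb)
    have h12 : w₁ s₀ = w₂ s₀ := by rw [hw₁.2.1, hw₂.2.1]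
    exact huni s hs0 hsb w₁ w₂ hd₁ hd₂ h12 (right_mem_Icc.mpr hs0)
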